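/- Let Ψ be a root datum with finite automorphism group Γ stabilizing a base. The map i* induces a bijection between the set of Γ-invariant positive systems in Φ and the set of positive systems in Φ̄ = i*(Φ): a Γ-invariant positive system Π maps to i*(Π), and the inverse sends a positive system Π̄ ⊆ Φ̄ to (i*)^{-1}(Π̄) ∩ Φ. -/

import Mathlib

open scoped BigOperators Classical

/-- A (not necessarily reduced) root datum `Ψ = (X*, Φ, X_*, Φ^∨)`:
dual lattices `X`, `Y` in perfect duality, a finite set of roots, and a
coroot map satisfying the usual axioms. -/
structure ZRootDatum (X Y : Type) [AddCommGroup X] [AddCommGroup Y] : Type where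
  pair : X →+ Y →+ ℤ
  perfect : Function.Bijective fun x : X => pair x
  perfect' : Function.Bijective fun y : Y => pair.flip y
  roots : Finset X
  coroot : X → Y
  pair_self : ∀ β ∈ roots, pair β (coroot β) = 2
  reflect_mem : ∀ β ∈ roots, ∀ x ∈ roots, x - pair x (coroot β) • β ∈ roots
  coreflect_mem : ∀ β ∈ roots, ∀ β' ∈ roots,
    ∃ β'' ∈ roots, coroot β' - pair β (coroot β') • coroot β = coroot β''

variable {X Y Γ : Type} [AddCommGroup X] [AddCommGroup Y] [Group Γ]

/-- The multiplicative group structure on `AddAut A` (composition), as in the older Mathlib,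
where `AddAut A` carried a `Group` instance; current Mathlib gives it an `AddGroup` instead. -/
instance AddAut.groupOfComp (A : Type*) [Add A] : Group (AddAut A) where
  mul g h := AddEquiv.trans h g
  one := AddEquiv.refl _
  inv := AddEquiv.symm
  mul_assoc _ _ _ := rfl
  one_mul _ := rfl
  mul_one _ := rfl
  inv_mul_cancel := AddEquiv.self_trans_symm

/-- The Weyl group of a root datum: the subgroup of `Aut(X)` generated by the
reflections `w_β : x ↦ x - ⟨x, β^∨⟩β` through the roots. -/
def ZRootDatum.weylGroup (Ψ : ZRootDatum X Y) : Subgroup (AddAut X) :=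
  Subgroup.closure {w : AddAut X | ∃ β ∈ Ψ.roots, ∀ x, w x = x - Ψ.pair x (Ψ.coroot β) • β}

/-- `Δ` is a base (system of simple roots) of the root datum. -/
def ZRootDatum.IsBase (Ψ : ZRootDatum X Y) (Δ : Finset X) : Prop :=
  (↑Δ : Set X) ⊆ ↑Ψ.roots ∧
  LinearIndependent ℤ (fun a : ↥(↑Δ : Set X) => (a : X)) ∧
  ∀ β ∈ Ψ.roots, ∃ c : X → ℤ,
    β = ∑ a ∈ Δ, c a • a ∧ ((∀ a ∈ Δ, 0 ≤ c a) ∨ (∀ a ∈ Δ, c a ≤ 0))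

/-- A group `Γ` acting (via `ρ` on `X*` and `ρ'` on `X_*`) by automorphisms of
the root datum `Ψ`. -/
structure RDAction (Ψ : ZRootDatum X Y) (ρ : Γ →* AddAut X) (ρ' : Γ →* AddAut Y) : Prop where
  pair_eq : ∀ γ x y, Ψ.pair (ρ γ x) (ρ' γ y) = Ψ.pair x y
  root_mem : ∀ γ, ∀ β ∈ Ψ.roots, ρ γ β ∈ Ψ.roots
  coroot_eq : ∀ γ, ∀ β ∈ Ψ.roots, Ψ.coroot (ρ γ β) = ρ' γ (Ψ.coroot β)

/-- The norm map `N : x ↦ ∑_{γ ∈ Γ} γ·x`.  For a free lattice `X`, its kernel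
is exactly the kernel of the projection of `X` onto the coinvariants `X_Γ`
modulo torsion. -/
noncomputable def normMap [Fintype Γ] (ρ : Γ →* AddAut X) : X →+ X :=
  ∑ γ : Γ, ((ρ γ : X ≃+ X) : X →+ X)

/-- The projection `i* : X* → X̄*` onto the coinvariant lattice modulo torsion. -/
noncomputable def istar [Fintype Γ] (ρ : Γ →* AddAut X) : X →+ X ⧸ (normMap ρ).ker :=
  QuotientAddGroup.mk' (normMap ρ).ker


/-- A positive system in `Φ`: the set of roots pairing strictly positively with
some regular vector of the dual space. -/
def IsPosSystem (Ψ : ZRootDatum X Y) (P : Finset X) : Prop :=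
  ∃ v : Y, (∀ β ∈ Ψ.roots, Ψ.pair β v ≠ 0) ∧
    ∀ β, β ∈ P ↔ β ∈ Ψ.roots ∧ 0 < Ψ.pair β v

/-- A positive system in the restricted root system `Φ̄ = i*(Φ)`: the set of
restricted roots pairing strictly positively with some regular vector of the
dual space `X̄_* = (X_*)^Γ` of `X̄*`. -/
def IsPosSystemBar [Fintype Γ] (Ψ : ZRootDatum X Y) (ρ : Γ →* AddAut X)
    (ρ' : Γ →* AddAut Y) (P : Finset (X ⧸ (normMap ρ).ker)) : Prop :=
  ∃ v : Y, (∀ γ : Γ, ρ' γ v = v) ∧ (∀ β ∈ Ψ.roots, Ψ.pair β v ≠ 0) ∧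
    ∀ a, a ∈ P ↔ ∃ β ∈ Ψ.roots, istar ρ β = a ∧ 0 < Ψ.pair β v

section Aux

variable [Fintype Γ]

lemma normMap_apply' (ρ : Γ →* AddAut X) (x : X) : normMap ρ x = ∑ γ : Γ, ρ γ x := by
  simp [normMap]

lemma istar_rho (ρ : Γ →* AddAut X) (γ : Γ) (x : X) : istar ρ (ρ γ x) = istar ρ x := by
  rw [istar, QuotientAddGroup.mk'_eq_mk']
  refine ⟨x - ρ γ x, ?_, by abel⟩
  simp only [AddMonoidHom.mem_ker, map_sub, sub_eq_zero]
  simp only [normMap_apply']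
  exact (Fintype.sum_equiv (Equiv.mulRight γ) _ _ fun δ => by
    simp [map_mul, AddAut.mul_apply]; rfl).symm

lemma pair_ker_fixed (Ψ : ZRootDatum X Y) (ρ : Γ →* AddAut X) (ρ' : Γ →* AddAut Y)
    (hact : RDAction Ψ ρ ρ') {v : Y} (hv : ∀ γ : Γ, ρ' γ v = v) {x : X}
    (hx : x ∈ (normMap ρ).ker) : Ψ.pair x v = 0 := by
  have h : Ψ.pair (normMap ρ x) v = (Fintype.card Γ : ℤ) * Ψ.pair x v := by
    rw [normMap_apply', map_sum, AddMonoidHom.finset_sum_apply]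
    have : ∀ γ : Γ, Ψ.pair (ρ γ x) v = Ψ.pair x v := fun γ => by
      conv_lhs => rw [← hv γ]
      exact hact.pair_eq γ x v
    rw [Finset.sum_congr rfl fun γ _ => this γ, Finset.sum_const, Finset.card_univ,
      nsmul_eq_mul]
  rw [AddMonoidHom.mem_ker.mp hx] at h
  simp only [map_zero, AddMonoidHom.zero_apply] at h
  have hcard : (Fintype.card Γ : ℤ) ≠ 0 := by
    exact_mod_cast Fintype.card_ne_zero (α := Γ)
  exact (mul_eq_zero.mp h.symm).resolve_left hcard

lemma pair_eq_of_istar_eq (Ψ : ZRootDatum X Y) (ρ : Γ →* AddAut X) (ρ' : Γ →* AddAut Y)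
    (hact : RDAction Ψ ρ ρ') {w : Y} (hw : ∀ γ : Γ, ρ' γ w = w) {x y : X}
    (h : istar ρ x = istar ρ y) : Ψ.pair x w = Ψ.pair y w := by
  rw [istar, QuotientAddGroup.mk'_eq_mk'] at h
  obtain ⟨z, hz, hxz⟩ := h
  have h0 := pair_ker_fixed Ψ ρ ρ' hact hw hz
  rw [← hxz]
  simp [h0]

lemma sign_claim (Ψ : ZRootDatum X Y) (ρ : Γ →* AddAut X) (ρ' : Γ →* AddAut Y)
    (hact : RDAction Ψ ρ ρ') {P : Finset X} {v : Y}
    (hreg : ∀ β ∈ Ψ.roots, Ψ.pair β v ≠ 0)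
    (hmem : ∀ β, β ∈ P ↔ β ∈ Ψ.roots ∧ 0 < Ψ.pair β v)
    (hinv : ∀ γ : Γ, ∀ b ∈ P, ρ γ b ∈ P) :
    (∀ δ : Γ, ρ' δ (∑ γ : Γ, ρ' γ v) = ∑ γ : Γ, ρ' γ v) ∧
    ∀ β ∈ Ψ.roots,
      Ψ.pair β (∑ γ : Γ, ρ' γ v) ≠ 0 ∧ (0 < Ψ.pair β (∑ γ : Γ, ρ' γ v) ↔ β ∈ P) := by
  haveI : Nonempty Γ := ⟨1⟩
  have hfix : ∀ δ : Γ, ρ' δ (∑ γ : Γ, ρ' γ v) = ∑ γ : Γ, ρ' γ v := by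
    intro δ
    rw [map_sum]
    exact Fintype.sum_equiv (Equiv.mulLeft δ) _ _ fun γ => by
      simp [map_mul, AddAut.mul_apply]; rfl
  have hterm : ∀ (β : X) (γ : Γ), Ψ.pair β (ρ' γ v) = Ψ.pair (ρ γ⁻¹ β) v := by
    intro β γ
    have : ρ γ (ρ γ⁻¹ β) = β := by
      change (ρ γ * ρ γ⁻¹) β = β; rw [← map_mul, mul_inv_cancel, map_one]; rfl
    conv_lhs => rw [← this]
    exact hact.pair_eq γ _ v
  have hsum : ∀ β : X, Ψ.pair β (∑ γ : Γ, ρ' γ v) = ∑ γ : Γ, Ψ.pair (ρ γ⁻¹ β) v := by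
    intro β
    rw [map_sum]
    exact Finset.sum_congr rfl fun γ _ => hterm β γ
  refine ⟨hfix, fun β hβ => ?_⟩
  by_cases hP : β ∈ P
  · have hpos : 0 < Ψ.pair β (∑ γ : Γ, ρ' γ v) := by
      rw [hsum]
      refine Finset.sum_pos (fun γ _ => ?_) Finset.univ_nonempty
      exact ((hmem _).mp (hinv γ⁻¹ β hP)).2
    exact ⟨ne_of_gt hpos, iff_of_true hpos hP⟩
  · have hneg : Ψ.pair β (∑ γ : Γ, ρ' γ v) < 0 := by
      rw [hsum]
      refine Finset.sum_neg (fun γ _ => ?_) Finset.univ_nonempty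
      have hr : ρ γ⁻¹ β ∈ Ψ.roots := hact.root_mem γ⁻¹ β hβ
      have hnp : ρ γ⁻¹ β ∉ P := by
        intro hc
        apply hP
        have := hinv γ _ hc
        rwa [show ρ γ (ρ γ⁻¹ β) = β by
          change (ρ γ * ρ γ⁻¹) β = β; rw [← map_mul, mul_inv_cancel, map_one]
          rfl] at this
      rcases lt_or_gt_of_ne (hreg _ hr) with h | h
      · exact h
      · exact absurd ((hmem _).mpr ⟨hr, h⟩) hnp
    refine ⟨ne_of_lt hneg, ?_⟩
    simp only [hP, iff_false, not_lt]
    exact le_of_lt hneg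

end Aux


/-- The map `i*` induces a bijection between the set of
`Γ`-invariant positive systems in `Φ` and the set of positive systems in
`Φ̄ = i*(Φ)`: a `Γ`-invariant positive system `Π` maps to `i*(Π)`, and the
inverse sends a positive system `Π̄ ⊆ Φ̄` to `(i*)⁻¹(Π̄) ∩ Φ`. -/
theorem pos_system_bijection
    [Fintype Γ] [Module.Free ℤ X] [Module.Finite ℤ X]
    (Ψ : ZRootDatum X Y) (ρ : Γ →* AddAut X) (ρ' : Γ →* AddAut Y)
    (hact : RDAction Ψ ρ ρ') (Δ : Finset X) (hΔ : Ψ.IsBase Δ)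
    (hstab : ∀ γ : Γ, ∀ a ∈ Δ, ρ γ a ∈ Δ) :
    (∀ P : Finset X, IsPosSystem Ψ P → (∀ γ : Γ, ∀ b ∈ P, ρ γ b ∈ P) →
        IsPosSystemBar Ψ ρ ρ' (P.image (istar ρ))) ∧
    (∀ Q : Finset (X ⧸ (normMap ρ).ker), IsPosSystemBar Ψ ρ ρ' Q →
        IsPosSystem Ψ (Ψ.roots.filter fun b => istar ρ b ∈ Q) ∧
        (∀ γ : Γ, ∀ b ∈ (Ψ.roots.filter fun b => istar ρ b ∈ Q),
          ρ γ b ∈ (Ψ.roots.filter fun b => istar ρ b ∈ Q)) ∧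
        (Ψ.roots.filter fun b => istar ρ b ∈ Q).image (istar ρ) = Q) ∧
    (∀ P P' : Finset X, IsPosSystem Ψ P → (∀ γ : Γ, ∀ b ∈ P, ρ γ b ∈ P) →
        IsPosSystem Ψ P' → (∀ γ : Γ, ∀ b ∈ P', ρ γ b ∈ P') →
        P.image (istar ρ) = P'.image (istar ρ) → P = P') := by
  classical
  refine ⟨?_, ?_, ?_⟩
  · -- Part 1: image of a Γ-invariant positive system is a positive system in Φ̄
    intro P hP hinv
    obtain ⟨v, hreg, hmem⟩ := hP
    obtain ⟨hfix, hsign⟩ := sign_claim Ψ ρ ρ' hact hreg hmem hinv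
    refine ⟨∑ γ : Γ, ρ' γ v, hfix, fun β hβ => (hsign β hβ).1, fun a => ?_⟩
    constructor
    · intro ha
      obtain ⟨β, hβP, rfl⟩ := Finset.mem_image.mp ha
      have hβr := ((hmem β).mp hβP).1
      exact ⟨β, hβr, rfl, (hsign β hβr).2.mpr hβP⟩
    · rintro ⟨β, hβ, rfl, hpos⟩
      exact Finset.mem_image_of_mem _ ((hsign β hβ).2.mp hpos)
  · -- Part 2: preimage of a positive system in Φ̄
    intro Q hQ
    obtain ⟨v, hfix, hreg, hmem⟩ := hQ
    have hpeq : ∀ x y : X, istar ρ x = istar ρ y → Ψ.pair x v = Ψ.pair y v :=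
      fun x y h => pair_eq_of_istar_eq Ψ ρ ρ' hact hfix h
    have hchar : ∀ β ∈ Ψ.roots, (istar ρ β ∈ Q ↔ 0 < Ψ.pair β v) := by
      intro β hβ
      constructor
      · intro h
        obtain ⟨β', hβ', he, hpos⟩ := (hmem _).mp h
        rwa [hpeq β β' he.symm]
      · intro h
        exact (hmem _).mpr ⟨β, hβ, rfl, h⟩
    refine ⟨⟨v, hreg, fun β => ?_⟩, ?_, ?_⟩
    · rw [Finset.mem_filter]
      constructor
      · rintro ⟨h1, h2⟩
        exact ⟨h1, (hchar β h1).mp h2⟩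
      · rintro ⟨h1, h2⟩
        exact ⟨h1, (hchar β h1).mpr h2⟩
    · intro γ b hb
      rw [Finset.mem_filter] at hb ⊢
      exact ⟨hact.root_mem γ b hb.1, by rw [istar_rho]; exact hb.2⟩
    · ext a
      rw [Finset.mem_image]
      constructor
      · rintro ⟨b, hb, rfl⟩
        exact (Finset.mem_filter.mp hb).2
      · intro ha
        obtain ⟨β, hβ, he, hpos⟩ := (hmem _).mp ha
        exact ⟨β, Finset.mem_filter.mpr ⟨hβ, he ▸ ha⟩, he⟩
  · -- Part 3: injectivity
    intro P P' hP hinvP hP' hinvP' himg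
    obtain ⟨v, hreg, hmem⟩ := hP
    obtain ⟨v', hreg', hmem'⟩ := hP'
    obtain ⟨hfix, hsign⟩ := sign_claim Ψ ρ ρ' hact hreg hmem hinvP
    obtain ⟨hfix', hsign'⟩ := sign_claim Ψ ρ ρ' hact hreg' hmem' hinvP'
    have step : ∀ (P₁ P₂ : Finset X) (w : Y), (∀ γ : Γ, ρ' γ w = w) →
        (∀ β ∈ P₁, β ∈ Ψ.roots) → (∀ β ∈ P₂, β ∈ Ψ.roots) →
        (∀ β ∈ Ψ.roots, Ψ.pair β w ≠ 0 ∧ (0 < Ψ.pair β w ↔ β ∈ P₂)) →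
        P₁.image (istar ρ) = P₂.image (istar ρ) → P₁ ⊆ P₂ := by
      intro P₁ P₂ w hw h1 h2 hs him β hβ
      have hβr := h1 β hβ
      have : istar ρ β ∈ P₂.image (istar ρ) := him ▸ Finset.mem_image_of_mem _ hβ
      obtain ⟨β', hβ', he⟩ := Finset.mem_image.mp this
      have hpos : 0 < Ψ.pair β' w := (hs β' (h2 β' hβ')).2.mpr hβ'
      have heq : Ψ.pair β w = Ψ.pair β' w :=
        pair_eq_of_istar_eq Ψ ρ ρ' hact hw he.symm
      exact (hs β hβr).2.mp (heq ▸ hpos)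
    have hPr : ∀ β ∈ P, β ∈ Ψ.roots := fun β h => ((hmem β).mp h).1
    have hP'r : ∀ β ∈ P', β ∈ Ψ.roots := fun β h => ((hmem' β).mp h).1
    exact Finset.Subset.antisymm
      (step P P' (∑ γ : Γ, ρ' γ v') hfix' hPr hP'r hsign' himg)
      (step P' P (∑ γ : Γ, ρ' γ v) hfix hP'r hPr hsign himg.symm)
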